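/- (Weak duality for the reformulated Benders subproblem.) Let q_{ν_i,c_i}, i = 0,…,I, be cuts with ν_0 = 0 and c_0 = 0, and let G(s_0,…,s_{N−1}) := ENNReal.ofReal( max_{i=0,…,I} q_{ν_i,c_i}(s_0,…,s_{N−1}) ). Let ν ∈ ℝ^n, μ ∈ ℝ^{nc} with μ ≥ 0 componentwise, and λ ∈ ℝ^{I+1} with λ ≥ 0 componentwise and ∑_{i=0}^{I} λ_i = γ. Suppose ξ ∈ ℝ satisfies, for all x' ∈ ℝ^n, u' ∈ ℝ^m, δ' ∈ {0,1}^{nδ}, z' ∈ ℝ^{nz}: ξ ≤ μᵀ(E2 δ' + E3 z' − E1 u' − E4 x') + (γ^N/2)(x'−x_g)ᵀQ(x'−x_g) + (γ^N/2)(u'−u_g)ᵀR(u'−u_g) + (∑_{i=0}^{I} λ_i ν_i)ᵀ(A x' + B1 u' + B2 δ' + B3 z') − νᵀ x'. Set c' := ∑_{i=0}^{I} λ_i c_i − μᵀ E5 + ξ. Then for every x ∈ ℝ^n and every (s_0,…,s_{N−1}) ∈ S^(N)(x), ENNReal.ofReal( q_{ν,c'}(s_0,…,s_{N−1}) ) ≤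 (T G)(s_0,…,s_{N−1}). -/

import Mathlib

open Matrix
open scoped ENNReal

/-- Data of a mixed logical dynamical (MLD) system. -/
structure MLD (n m nδ nz nc : ℕ) where
  A : Matrix (Fin n) (Fin n) ℝ
  B1 : Matrix (Fin n) (Fin m) ℝ
  B2 : Matrix (Fin n) (Fin nδ) ℝ
  B3 : Matrix (Fin n) (Fin nz) ℝ
  E1 : Matrix (Fin nc) (Fin m) ℝ
  E2 : Matrix (Fin nc) (Fin nδ) ℝ
  E3 : Matrix (Fin nc) (Fin nz) ℝ
  E4 : Matrix (Fin nc) (Fin n) ℝ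
  E5 : Fin nc → ℝ

/-- Cost data: quadratic stage cost matrices, goal pair and discount factor. -/
structure CostData (n m : ℕ) where
  Q : Matrix (Fin n) (Fin n) ℝ
  R : Matrix (Fin m) (Fin m) ℝ
  xg : Fin n → ℝ
  ug : Fin m → ℝ
  γ : ℝ

/-- A tuple s = (x, u, δ, z). -/
abbrev Tup (n m nδ nz : ℕ) :=
  (Fin n → ℝ) × (Fin m → ℝ) × (Fin nδ → ℝ) × (Fin nz → ℝ)

namespace MLD

variable {n m nδ nz nc : ℕ}

/-- Admissibility constraints: δ is binary and the MLD inequality holds. -/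
def Feas (M : MLD n m nδ nz nc) (s : Tup n m nδ nz) : Prop :=
  (∀ j, s.2.2.1 j = 0 ∨ s.2.2.1 j = 1) ∧
  ∀ i, (M.E2.mulVec s.2.2.1 + M.E3.mulVec s.2.2.2) i ≤
       (M.E4.mulVec s.1 + M.E1.mulVec s.2.1 + M.E5) i

/-- s ∈ S(x): the tuple s is admissible at x. -/
def inS (M : MLD n m nδ nz nc) (x : Fin n → ℝ) (s : Tup n m nδ nz) : Prop :=
  s.1 = x ∧ M.Feas s

/-- Successor state f(s) = A x + B1 u + B2 δ + B3 z. -/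
def step (M : MLD n m nδ nz nc) (s : Tup n m nδ nz) : Fin n → ℝ :=
  M.A.mulVec s.1 + M.B1.mulVec s.2.1 + M.B2.mulVec s.2.2.1 + M.B3.mulVec s.2.2.2

/-- Feasible infinite trajectory from x. -/
def Traj (M : MLD n m nδ nz nc) (x : Fin n → ℝ) (τ : ℕ → Tup n m nδ nz) : Prop :=
  (τ 0).1 = x ∧ (∀ t, M.Feas (τ t)) ∧ ∀ t, (τ (t + 1)).1 = M.step (τ t)

/-- σ ∈ S^(N)(x): N-step feasible trajectory starting at x. -/
def TrajN (M : MLD n m nδ nz nc) {N : ℕ} (x : Fin n → ℝ)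
    (σ : Fin N → Tup n m nδ nz) : Prop :=
  (∀ k : Fin N, (k : ℕ) = 0 → (σ k).1 = x) ∧
  (∀ k, M.Feas (σ k)) ∧
  ∀ (k : ℕ) (h : k + 1 < N), (σ ⟨k + 1, h⟩).1 = M.step (σ ⟨k, Nat.lt_of_succ_lt h⟩)

/-- x_N = f(s_{N-1}): the state reached after the N-step trajectory. -/
def lastState (M : MLD n m nδ nz nc) {N : ℕ} (hN : 0 < N)
    (σ : Fin N → Tup n m nδ nz) : Fin n → ℝ :=
  M.step (σ ⟨N - 1, Nat.sub_lt hN one_pos⟩)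

end MLD

noncomputable section

/-- Quadratic stage cost ℓ(x,u). -/
def stageCost {n m : ℕ} (C : CostData n m) (x : Fin n → ℝ) (u : Fin m → ℝ) : ℝ :=
  (1 / 2) * ((x - C.xg) ⬝ᵥ C.Q.mulVec (x - C.xg)) +
  (1 / 2) * ((u - C.ug) ⬝ᵥ C.R.mulVec (u - C.ug))

/-- Total discounted cost of an infinite trajectory, in [0, ∞]. -/
def trajCost {n m nδ nz : ℕ} (C : CostData n m) (τ : ℕ → Tup n m nδ nz) : ℝ≥0∞ :=
  ∑' t : ℕ, ENNReal.ofReal (C.γ ^ t * stageCost C (τ t).1 (τ t).2.1)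

/-- Optimal value function V★. -/
def Vstar {n m nδ nz nc : ℕ} (M : MLD n m nδ nz nc) (C : CostData n m)
    (x : Fin n → ℝ) : ℝ≥0∞ :=
  ⨅ τ : {τ : ℕ → Tup n m nδ nz // M.Traj x τ}, trajCost C τ.1

/-- Optimal N-step Q-function Q^(N)★: infimum of total cost over all feasible infinite
trajectories (from the trajectory's own initial state) whose first N elements are σ. -/
def QNstar {n m nδ nz nc : ℕ} (M : MLD n m nδ nz nc) (C : CostData n m) {N : ℕ}
    (σ : Fin N → Tup n m nδ nz) : ℝ≥0∞ :=
  ⨅ τ : {τ : ℕ → Tup n m nδ nz // M.Traj (τ 0).1 τ ∧ ∀ k : Fin N, τ (k : ℕ) = σ k},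
    trajCost C τ.1

/-- The shifted trajectory (s_1, …, s_N) obtained by appending s_N. -/
def shiftAppend {n m nδ nz : ℕ} {N : ℕ} (σ : Fin N → Tup n m nδ nz)
    (sN : Tup n m nδ nz) : Fin N → Tup n m nδ nz :=
  fun k => if h : (k : ℕ) + 1 < N then σ ⟨(k : ℕ) + 1, h⟩ else sN

/-- The N-step Bellman operator T. -/
def bellman {n m nδ nz nc : ℕ} (M : MLD n m nδ nz nc) (C : CostData n m)
    {N : ℕ} (hN : 0 < N) (G : (Fin N → Tup n m nδ nz) → ℝ≥0∞)
    (σ : Fin N → Tup n m nδ nz) : ℝ≥0∞ :=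
  ENNReal.ofReal (stageCost C (σ ⟨0, hN⟩).1 (σ ⟨0, hN⟩).2.1) +
  ENNReal.ofReal C.γ *
    ⨅ sN : {s : Tup n m nδ nz // M.inS (M.lastState hN σ) s}, G (shiftAppend σ sN.1)

/-- A Benders cut q_{ν,c}. -/
def cutFun {n m nδ nz nc : ℕ} (M : MLD n m nδ nz nc) (C : CostData n m)
    {N : ℕ} (hN : 0 < N) (ν : Fin n → ℝ) (c : ℝ)
    (σ : Fin N → Tup n m nδ nz) : ℝ :=
  (∑ t : Fin N, C.γ ^ (t : ℕ) * stageCost C (σ t).1 (σ t).2.1) +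
  ν ⬝ᵥ M.lastState hN σ + c

end


lemma stageCost_nonneg {n m : ℕ} (C : CostData n m) (hQ : C.Q.PosDef) (hR : C.R.PosDef)
    (x : Fin n → ℝ) (u : Fin m → ℝ) : 0 ≤ stageCost C x u := by
  have h1 := hQ.posSemidef.dotProduct_mulVec_nonneg (x - C.xg)
  have h2 := hR.posSemidef.dotProduct_mulVec_nonneg (u - C.ug)
  simp only [star_trivial] at h1 h2
  unfold stageCost
  nlinarith

lemma shiftAppend_last {n m nδ nz : ℕ} {N : ℕ} (hN : 0 < N) (σ : Fin N → Tup n m nδ nz)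
    (s : Tup n m nδ nz) : shiftAppend σ s ⟨N - 1, Nat.sub_lt hN one_pos⟩ = s := by
  unfold shiftAppend
  rw [dif_neg]
  show ¬ (N - 1 + 1 < N)
  omega

/-- Key sum identity: ℓ₀ + γ * Σ γ^t f(σ'_t) = Σ γ^t f(σ_t) + γ^N f(sN). -/
lemma sum_shiftAppend {n m nδ nz : ℕ} {N : ℕ} (hN : 0 < N) (γ : ℝ)
    (σ : Fin N → Tup n m nδ nz) (s : Tup n m nδ nz) (f : Tup n m nδ nz → ℝ) :
    f (σ ⟨0, hN⟩) + γ * ∑ t : Fin N, γ ^ (t : ℕ) * f (shiftAppend σ s t) =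
      (∑ t : Fin N, γ ^ (t : ℕ) * f (σ t)) + γ ^ N * f s := by
  obtain ⟨K, rfl⟩ : ∃ K, N = K + 1 := ⟨N - 1, by omega⟩
  rw [Finset.mul_sum, Fin.sum_univ_castSucc (f := fun t : Fin (K+1) =>
        γ * (γ ^ (t : ℕ) * f (shiftAppend σ s t))),
      Fin.sum_univ_succ (f := fun t : Fin (K+1) => γ ^ (t : ℕ) * f (σ t))]
  have hlast : shiftAppend σ s (Fin.last K) = s := by
    unfold shiftAppend
    rw [dif_neg]
    simp
  have hcast : ∀ t : Fin K, shiftAppend σ s t.castSucc = σ t.succ := by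
    intro t
    unfold shiftAppend
    rw [dif_pos (by simpa using t.isLt)]
    congr 1
  simp only [hlast, hcast, Fin.val_last, Fin.coe_castSucc, Fin.val_succ, Fin.val_zero, pow_zero,
    one_mul]
  have h0 : σ ⟨0, hN⟩ = σ 0 := rfl
  rw [h0]
  have hterm : ∀ t : Fin K, γ * (γ ^ (t : ℕ) * f (σ t.succ)) = γ ^ ((t : ℕ) + 1) * f (σ t.succ) :=
    fun t => by ring
  rw [Finset.sum_congr rfl (fun t _ => hterm t)]
  ring

lemma sum_dotProduct' {k p : ℕ} (f : Fin k → (Fin p → ℝ)) (v : Fin p → ℝ) :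
    (∑ i, f i) ⬝ᵥ v = ∑ i, f i ⬝ᵥ v := by
  simp only [dotProduct, Finset.sum_apply, Finset.sum_mul]
  exact Finset.sum_comm

/-- weak duality for the reformulated Benders subproblem. -/
theorem benders_weak_duality {n m nδ nz nc : ℕ} (M : MLD n m nδ nz nc)
    (C : CostData n m) (hQ : C.Q.PosDef) (hR : C.R.PosDef)
    (hγ0 : 0 < C.γ) (hγ1 : C.γ ≤ 1) {N : ℕ} (hN : 0 < N) (I : ℕ)
    (νs : Fin (I + 1) → (Fin n → ℝ)) (cs : Fin (I + 1) → ℝ)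
    (hν0 : νs 0 = 0) (hc0 : cs 0 = 0)
    (ν : Fin n → ℝ) (μ : Fin nc → ℝ) (hμ : ∀ j, 0 ≤ μ j)
    (lam : Fin (I + 1) → ℝ) (hlam : ∀ i, 0 ≤ lam i) (hlamsum : ∑ i, lam i = C.γ)
    (ξ : ℝ)
    (hξ : ∀ (x' : Fin n → ℝ) (u' : Fin m → ℝ) (δ' : Fin nδ → ℝ) (z' : Fin nz → ℝ),
      (∀ j, δ' j = 0 ∨ δ' j = 1) →
      ξ ≤ μ ⬝ᵥ (M.E2.mulVec δ' + M.E3.mulVec z' - M.E1.mulVec u' - M.E4.mulVec x')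
        + (C.γ ^ N / 2) * ((x' - C.xg) ⬝ᵥ C.Q.mulVec (x' - C.xg))
        + (C.γ ^ N / 2) * ((u' - C.ug) ⬝ᵥ C.R.mulVec (u' - C.ug))
        + (∑ i, lam i • νs i) ⬝ᵥ
            (M.A.mulVec x' + M.B1.mulVec u' + M.B2.mulVec δ' + M.B3.mulVec z')
        - ν ⬝ᵥ x')
    (c' : ℝ) (hc' : c' = (∑ i, lam i * cs i) - μ ⬝ᵥ M.E5 + ξ)
    (x : Fin n → ℝ) (σ : Fin N → Tup n m nδ nz) (hσ : M.TrajN x σ) :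
    ENNReal.ofReal (cutFun M C hN ν c' σ) ≤
      bellman M C hN
        (fun σ' => ENNReal.ofReal (Finset.univ.sup' Finset.univ_nonempty
          fun i : Fin (I + 1) => cutFun M C hN (νs i) (cs i) σ')) σ := by
  obtain ⟨hσ0, hfeas, hstep⟩ := hσ
  unfold bellman
  set xN := M.lastState hN σ with hxN
  by_cases hE : Nonempty {s : Tup n m nδ nz // M.inS xN s}
  · rw [ENNReal.mul_iInf_of_ne (by simp [ENNReal.ofReal_pos.mpr hγ0, (ENNReal.ofReal_pos.mpr hγ0).ne']) ENNReal.ofReal_ne_top,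
      ENNReal.add_iInf]
    refine le_iInf fun sN => ?_
    set σ' := shiftAppend σ sN.1 with hσ'
    have hsN1 : sN.1.1 = xN := sN.2.1
    have hδbin := sN.2.2.1
    have hineq := sN.2.2.2
    set ℓ0 := stageCost C (σ ⟨0, hN⟩).1 (σ ⟨0, hN⟩).2.1 with hℓ0
    have hℓ0nn : 0 ≤ ℓ0 := stageCost_nonneg C hQ hR _ _
    set Ssum' := ∑ t : Fin N, C.γ ^ (t : ℕ) * stageCost C (σ' t).1 (σ' t).2.1 with hSsum'
    have hSnn : 0 ≤ Ssum' := Finset.sum_nonneg fun t _ =>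
      mul_nonneg (pow_nonneg hγ0.le _) (stageCost_nonneg C hQ hR _ _)
    set maxq := Finset.univ.sup' Finset.univ_nonempty
      (fun i : Fin (I + 1) => cutFun M C hN (νs i) (cs i) σ') with hmaxq
    have hlast' : M.lastState hN σ' = M.step sN.1 := by
      unfold MLD.lastState
      rw [hσ', shiftAppend_last hN σ sN.1]
    have hq : ∀ i, cutFun M C hN (νs i) (cs i) σ' =
        Ssum' + νs i ⬝ᵥ M.step sN.1 + cs i := by
      intro i
      rw [hSsum']
      unfold cutFun
      rw [hlast']
    have hmax0 : 0 ≤ maxq := by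
      have h1 : cutFun M C hN (νs 0) (cs 0) σ' ≤ maxq := by
        rw [hmaxq]
        exact Finset.le_sup' (fun i : Fin (I + 1) => cutFun M C hN (νs i) (cs i) σ')
          (Finset.mem_univ 0)
      rw [hq 0, hν0, hc0] at h1
      simp only [zero_dotProduct, add_zero] at h1
      linarith
    -- reduce to real inequality
    rw [← ENNReal.ofReal_mul hγ0.le, ← ENNReal.ofReal_add hℓ0nn (mul_nonneg hγ0.le hmax0)]
    apply ENNReal.ofReal_le_ofReal
    -- Step A : Σ λᵢ qᵢ ≤ γ * maxq
    have hA : (∑ i, lam i * cutFun M C hN (νs i) (cs i) σ') ≤ C.γ * maxq := by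
      calc (∑ i, lam i * cutFun M C hN (νs i) (cs i) σ')
          ≤ ∑ i, lam i * maxq := Finset.sum_le_sum fun i _ =>
            mul_le_mul_of_nonneg_left
              (by rw [hmaxq]
                  exact Finset.le_sup' (fun i : Fin (I + 1) => cutFun M C hN (νs i) (cs i) σ')
                    (Finset.mem_univ i)) (hlam i)
        _ = C.γ * maxq := by rw [← Finset.sum_mul, hlamsum]
    -- the ξ bound at sN
    have hξ' := hξ sN.1.1 sN.1.2.1 sN.1.2.2.1 sN.1.2.2.2 hδbin
    have hμE5 : μ ⬝ᵥ (M.E2.mulVec sN.1.2.2.1 + M.E3.mulVec sN.1.2.2.2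
        - M.E1.mulVec sN.1.2.1 - M.E4.mulVec sN.1.1) ≤ μ ⬝ᵥ M.E5 := by
      apply dotProduct_le_dotProduct_of_nonneg_left _ (fun j => hμ j)
      intro j
      have := hineq j
      simp only [Pi.add_apply, Pi.sub_apply] at this ⊢
      linarith
    have hξ2 : ξ ≤ μ ⬝ᵥ M.E5
        + C.γ ^ N * stageCost C sN.1.1 sN.1.2.1
        + (∑ i, lam i • νs i) ⬝ᵥ M.step sN.1 - ν ⬝ᵥ sN.1.1 := by
      have hstepeq : M.step sN.1 = M.A.mulVec sN.1.1 + M.B1.mulVec sN.1.2.1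
          + M.B2.mulVec sN.1.2.2.1 + M.B3.mulVec sN.1.2.2.2 := rfl
      rw [hstepeq]
      have hsplit : C.γ ^ N * stageCost C sN.1.1 sN.1.2.1 =
          C.γ ^ N / 2 * ((sN.1.1 - C.xg) ⬝ᵥ C.Q.mulVec (sN.1.1 - C.xg)) +
          C.γ ^ N / 2 * ((sN.1.2.1 - C.ug) ⬝ᵥ C.R.mulVec (sN.1.2.1 - C.ug)) := by
        unfold stageCost; ring
      linarith [hξ', hμE5, hsplit]
    -- Step B : the sum identity
    have hsum : ℓ0 + C.γ * Ssum' = (∑ t : Fin N, C.γ ^ (t : ℕ) * stageCost C (σ t).1 (σ t).2.1)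
        + C.γ ^ N * stageCost C sN.1.1 sN.1.2.1 :=
      sum_shiftAppend hN C.γ σ sN.1 (fun s => stageCost C s.1 s.2.1)
    -- expand Σ λᵢ qᵢ
    have hexp : (∑ i, lam i * cutFun M C hN (νs i) (cs i) σ') =
        C.γ * Ssum' + (∑ i, lam i • νs i) ⬝ᵥ M.step sN.1 + ∑ i, lam i * cs i := by
      rw [sum_dotProduct']
      simp only [smul_dotProduct, smul_eq_mul, hq]
      rw [← hlamsum, Finset.sum_mul, ← Finset.sum_add_distrib, ← Finset.sum_add_distrib]
      exact Finset.sum_congr rfl fun i _ => by ring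
    -- assemble
    calc cutFun M C hN ν c' σ
        = (∑ t : Fin N, C.γ ^ (t : ℕ) * stageCost C (σ t).1 (σ t).2.1)
          + ν ⬝ᵥ xN + c' := rfl
      _ ≤ ℓ0 + (∑ i, lam i * cutFun M C hN (νs i) (cs i) σ') := by
          rw [hexp, hc']
          have hνeq : ν ⬝ᵥ xN = ν ⬝ᵥ sN.1.1 := by rw [hsN1]
          linarith [hsum, hξ2, hνeq]
      _ ≤ ℓ0 + C.γ * maxq := by linarith
  · haveI := not_nonempty_iff.mp hE
    rw [iInf_of_empty, ENNReal.mul_top (ENNReal.ofReal_pos.mpr hγ0).ne']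
    simp
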